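/- arXiv:2509.06852 — 3 statements merged into one kernel-verified Lean document; each statement's English description precedes it below -/
import Mathlib

section
/- Let A be a real n×n matrix and let m be an even positive integer. Then the number of eigenvalues of A^m (over ℂ, counted with algebraic multiplicity) lying in the real interval (-∞, 0) is even. -/
open Polynomial Matrix

lemma evalCharpoly {N : ℕ} (M : Matrix (Fin N) (Fin N) ℂ) (x : ℂ) :
    M.charpoly.eval x = (x • (1 : Matrix (Fin N) (Fin N) ℂ) - M).det := by
  rw [Matrix.charpoly, ← Polynomial.coe_evalRingHom, RingHom.map_det]
  congr 1
  ext i j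
  by_cases h : i = j
  · subst h
    simp [Matrix.map_apply, Matrix.sub_apply, Matrix.smul_apply, Matrix.one_apply]
  · simp [Matrix.map_apply, Matrix.sub_apply, Matrix.smul_apply, Matrix.one_apply, h,
      charmatrix_apply_ne _ _ _ h]

lemma prodSwap {m : ℕ} (f : ℕ → ℂ → ℂ) (s : Multiset ℂ) :
    ∏ k ∈ Finset.range m, (s.map (f k)).prod
      = (s.map (fun μ => ∏ k ∈ Finset.range m, f k μ)).prod := by
  induction s using Multiset.induction with
  | empty => simp
  | cons a s ih => simp [Finset.prod_mul_distrib, ih]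

lemma rootsCharpolyPow {N : ℕ} (M : Matrix (Fin N) (Fin N) ℂ) {m : ℕ} (hm : Even m)
    (hm' : 0 < m) :
    (M ^ m).charpoly.roots = M.charpoly.roots.map (· ^ m) := by
  set p := M.charpoly with hpdef
  have hpm : p.Monic := Matrix.charpoly_monic M
  have hcard : Multiset.card p.roots = N := by
    rw [splits_iff_card_roots.mp (IsAlgClosed.splits p)]
    simp [hpdef]
  have hp : p = (p.roots.map (fun a => X - C a)).prod :=
    (IsAlgClosed.splits p).eq_prod_roots_of_monic hpm
  have hev : ∀ c : ℂ, p.eval c = (p.roots.map (fun μ => c - μ)).prod := by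
    intro c
    conv_lhs => rw [hp]
    rw [eval_multiset_prod, Multiset.map_map]
    simp [Function.comp]
  have hζ : IsPrimitiveRoot (Complex.exp (2 * Real.pi * Complex.I / m)) m :=
    Complex.isPrimitiveRoot_exp m hm'.ne'
  set ζ := Complex.exp (2 * Real.pi * Complex.I / m) with hζdef
  have hq : (M ^ m).charpoly = ((p.roots.map (· ^ m)).map (fun a => X - C a)).prod := by
    apply Polynomial.funext
    intro z
    obtain ⟨y, rfl⟩ := IsAlgClosed.exists_pow_nat_eq z hm'
    have hid : (X : ℂ[X]) ^ m - C (y ^ m)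
        = ∏ k ∈ Finset.range m, (X - C (ζ ^ k * y)) := X_pow_sub_C_eq_prod hζ hm' rfl
    -- inner identity
    have inner : ∀ μ : ℂ, ∏ k ∈ Finset.range m, (ζ ^ k * y - μ) = μ ^ m - y ^ m := by
      intro μ
      have h2 := congrArg (Polynomial.eval μ) hid
      simp only [eval_sub, eval_pow, eval_X, eval_C, eval_prod] at h2
      have h3 : ∏ k ∈ Finset.range m, (ζ ^ k * y - μ)
          = ∏ k ∈ Finset.range m, (-1 * (μ - ζ ^ k * y)) := by
        apply Finset.prod_congr rfl; intro k _; ring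
      rw [h3, Finset.prod_mul_distrib, Finset.prod_const, Finset.card_range, ← h2,
        hm.neg_one_pow, one_mul]
    -- determinant multiplicativity through aeval
    have hprod : ((aeval M) (∏ k ∈ Finset.range m, ((X : ℂ[X]) - C (ζ ^ k * y)))).det
        = ∏ k ∈ Finset.range m, ((aeval M) ((X : ℂ[X]) - C (ζ ^ k * y))).det := by
      exact map_prod ((Matrix.detMonoidHom).comp
        (aeval M : ℂ[X] →ₐ[ℂ] Matrix (Fin N) (Fin N) ℂ).toRingHom.toMonoidHom) _ _
    have e2 : (y ^ m) • (1 : Matrix (Fin N) (Fin N) ℂ) - M ^ m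
        = -((aeval M) ((X : ℂ[X]) ^ m - C (y ^ m))) := by
      simp [Algebra.algebraMap_eq_smul_one, _root_.smul_pow, smul_smul, mul_comm, smul_eq_mul]
    have e4 : ∀ k : ℕ, ((aeval M) ((X : ℂ[X]) - C (ζ ^ k * y))).det
        = (-1 : ℂ) ^ N * p.eval (ζ ^ k * y) := by
      intro k
      have : (aeval M) ((X : ℂ[X]) - C (ζ ^ k * y))
          = -((ζ ^ k * y) • (1 : Matrix (Fin N) (Fin N) ℂ) - M) := by
        simp [Algebra.algebraMap_eq_smul_one, _root_.smul_pow, smul_smul, mul_comm, smul_eq_mul]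
      rw [this, Matrix.det_neg, evalCharpoly, Fintype.card_fin]
    have lhs : (M ^ m).charpoly.eval (y ^ m)
        = (p.roots.map (fun μ => y ^ m - μ ^ m)).prod := by
      rw [evalCharpoly, e2, Matrix.det_neg, Fintype.card_fin, hid, hprod]
      simp only [e4]
      rw [Finset.prod_mul_distrib, Finset.prod_const, Finset.card_range]
      have hsign : ((-1 : ℂ) ^ N) ^ m = 1 := by
        rw [← pow_mul, mul_comm, pow_mul, hm.neg_one_pow, one_pow]
      rw [hsign, one_mul]
      have : ∏ k ∈ Finset.range m, p.eval (ζ ^ k * y)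
          = (p.roots.map (fun μ => μ ^ m - y ^ m)).prod := by
        simp only [hev]
        rw [prodSwap (fun k μ => ζ ^ k * y - μ)]
        congr 1
        apply Multiset.map_congr rfl
        intro μ _
        exact inner μ
      rw [this]
      have hflip : (p.roots.map (fun μ => μ ^ m - y ^ m)).prod
          = (-1 : ℂ) ^ (Multiset.card p.roots) * (p.roots.map (fun μ => y ^ m - μ ^ m)).prod := by
        have : p.roots.map (fun μ => μ ^ m - y ^ m)
            = p.roots.map (fun μ => (-1) * (y ^ m - μ ^ m)) := by
          apply Multiset.map_congr rfl; intro μ _; ring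
        rw [this]
        rw [show (fun μ : ℂ => (-1 : ℂ) * (y ^ m - μ ^ m))
            = fun μ : ℂ => (fun _ => (-1 : ℂ)) μ * (fun μ => y ^ m - μ ^ m) μ from rfl]
        rw [Multiset.prod_map_mul]
        congr 1
        simp [Multiset.map_const']
      rw [hflip, hcard, ← mul_assoc, ← mul_pow]
      simp
    rw [lhs, eval_multiset_prod, Multiset.map_map, Multiset.map_map]
    apply congrArg
    apply Multiset.map_congr rfl
    intro μ _
    simp
  rw [hq, roots_multiset_prod_X_sub_C]

lemma rootsMapConj (P : Polynomial ℝ) :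
    (P.map (algebraMap ℝ ℂ)).roots.map (starRingEnd ℂ) = (P.map (algebraMap ℝ ℂ)).roots := by
  have h1 : (P.map (algebraMap ℝ ℂ)).map (starRingEnd ℂ) = P.map (algebraMap ℝ ℂ) := by
    rw [Polynomial.map_map]
    congr 1
    ext x
    simp [Complex.conj_ofReal]
  have hcard : Multiset.card (P.map (algebraMap ℝ ℂ)).roots
      = (P.map (algebraMap ℝ ℂ)).natDegree :=
    splits_iff_card_roots.mp (IsAlgClosed.splits _)
  rw [roots_map_of_injective_of_card_eq_natDegree (RingHom.injective _) hcard, h1]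

lemma evenCardConjInvariant (s : Multiset ℂ) (hs : s.map (starRingEnd ℂ) = s)
    (hfix : ∀ z ∈ s, (starRingEnd ℂ) z ≠ z) : Even (Multiset.card s) := by
  induction s using Multiset.strongInductionOn with
  | _ s ih =>
    rcases Multiset.empty_or_exists_mem s with rfl | ⟨a, ha⟩
    · simp
    · have hconj : (starRingEnd ℂ) a ∈ s := by
        rw [← hs]; exact Multiset.mem_map_of_mem _ ha
      have hne : (starRingEnd ℂ) a ≠ a := hfix a ha
      set t := (s.erase a).erase ((starRingEnd ℂ) a) with ht
      have hmem : (starRingEnd ℂ) a ∈ s.erase a := (Multiset.mem_erase_of_ne hne).mpr hconj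
      have hts : t < s :=
        lt_of_le_of_lt (Multiset.erase_le _ _) ((Multiset.erase_lt).mpr ha)
      have hinj : Function.Injective (starRingEnd ℂ) := RingHom.injective _
      have htconj : t.map (starRingEnd ℂ) = t := by
        rw [ht, Multiset.map_erase _ hinj, Multiset.map_erase _ hinj, hs, Complex.conj_conj,
          Multiset.erase_comm]
      have htfix : ∀ z ∈ t, (starRingEnd ℂ) z ≠ z := fun z hz =>
        hfix z (Multiset.mem_of_mem_erase (Multiset.mem_of_mem_erase hz))
      have hcard : Multiset.card s = Multiset.card t + 2 := by
        have h1 : 0 < Multiset.card (s.erase a) := Multiset.card_pos.mpr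
          (fun h => by simp [h] at hmem)
        have h2 : 0 < Multiset.card s := Multiset.card_pos.mpr
          (fun h => by simp [h] at ha)
        have e1 : Multiset.card (s.erase a) = Multiset.card s - 1 := by
          rw [Multiset.card_erase_of_mem ha, Nat.pred_eq_sub_one]
        have e2 : Multiset.card t = Multiset.card (s.erase a) - 1 := by
          rw [ht, Multiset.card_erase_of_mem hmem, Nat.pred_eq_sub_one]
        omega
      rw [hcard]
      exact (ih t hts htconj htfix).add even_two

/-- For a real `n × n` matrix `A` and an even positive integer `m`, the number of
eigenvalues of `A ^ m` over `ℂ` (roots of the characteristic polynomial, counted with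
algebraic multiplicity) lying in the real interval `(-∞, 0)` is even. -/
theorem even_card_neg_eigenvalues_pow_even
    {n : ℕ} (A : Matrix (Fin n) (Fin n) ℝ) (m : ℕ) (hm : Even m) (hm' : 0 < m) :
    Even ((((A ^ m).charpoly.map (algebraMap ℝ ℂ)).roots.filter
      (fun z : ℂ => z.im = 0 ∧ z.re < 0)).card) := by
  classical
  have hpow : (A ^ m).map (algebraMap ℝ ℂ) = (A.map (algebraMap ℝ ℂ)) ^ m := by
    simpa [RingHom.mapMatrix_apply] using (map_pow (algebraMap ℝ ℂ).mapMatrix A m)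
  have hmap : (A ^ m).charpoly.map (algebraMap ℝ ℂ)
      = ((A.map (algebraMap ℝ ℂ)) ^ m).charpoly := by
    rw [← Matrix.charpoly_map, hpow]
  rw [hmap, rootsCharpolyPow _ hm hm', Multiset.filter_map, Multiset.card_map]
  set S := (A.map (algebraMap ℝ ℂ)).charpoly.roots with hSdef
  have hS : S.map (starRingEnd ℂ) = S := by
    rw [hSdef, Matrix.charpoly_map]
    exact rootsMapConj A.charpoly
  set Q := ((fun z : ℂ => z.im = 0 ∧ z.re < 0) ∘ fun x : ℂ => x ^ m) with hQdef
  have hQconj : ∀ z : ℂ, Q z ↔ Q ((starRingEnd ℂ) z) := by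
    intro z
    simp only [hQdef, Function.comp_apply, ← map_pow, Complex.conj_im, Complex.conj_re,
      neg_eq_zero]
  apply evenCardConjInvariant (S.filter Q)
  · conv_rhs => rw [← hS]
    rw [Multiset.filter_map]
    congr 1
    exact Multiset.filter_congr (fun z _ => hQconj z)
  · intro z hz hconj
    have hQz : Q z := Multiset.of_mem_filter hz
    simp only [hQdef, Function.comp_apply] at hQz
    obtain ⟨him, hre⟩ := hQz
    have hzim : z.im = 0 := by
      have := congrArg Complex.im hconj
      simp only [Complex.conj_im] at this
      linarith
    have hz' : z = (z.re : ℂ) := by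
      apply Complex.ext <;> simp [hzim]
    rw [hz'] at hre
    have hcast : ((z.re : ℂ) ^ m) = ((z.re ^ m : ℝ) : ℂ) := by push_cast; ring
    rw [hcast] at hre
    simp only [Complex.ofReal_re] at hre
    exact absurd hre (not_lt.mpr (hm.pow_nonneg z.re))
end

section
/- Let T be a tree and let C be a cycle (of length ≥ 3) in the line graph L(T). Then the vertex set of C induces a complete subgraph of L(T); in particular, every induced cycle in L(T) is a triangle. -/
open SimpleGraph

/-- A walk inside a single edge: if `x` and `u` both belong to the edge `e`, there is
a walk from `x` to `u` all of whose edges equal `e`. -/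
lemma walk_within_edge {V : Type*} {T : SimpleGraph V} (e : T.edgeSet) {x u : V}
    (hx : x ∈ (e : Sym2 V)) (hu : u ∈ (e : Sym2 V)) :
    ∃ q : T.Walk x u, ∀ d ∈ q.edges, d = (e : Sym2 V) := by
  by_cases hxu : x = u
  · subst hxu; exact ⟨SimpleGraph.Walk.nil, by simp⟩
  · have he : (e : Sym2 V) = s(x, u) := (Sym2.mem_and_mem_iff hxu).mp ⟨hx, hu⟩
    have hadj : T.Adj x u := by
      have := e.2
      rw [he] at this
      exact this
    refine ⟨SimpleGraph.Walk.cons hadj SimpleGraph.Walk.nil, ?_⟩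
    intro d hd
    simp only [SimpleGraph.Walk.edges_cons, SimpleGraph.Walk.edges_nil,
      List.mem_singleton] at hd
    rw [hd, he]

/-- From a walk in the line graph of `T` between edges `e` and `f`, and vertices
`x ∈ e`, `y ∈ f`, we can produce a walk in `T` from `x` to `y` whose edges all come
from the support of the line-graph walk. -/
lemma exists_walk_of_lineGraph_walk {V : Type*} {T : SimpleGraph V} :
    ∀ {e f : T.edgeSet} (p : T.lineGraph.Walk e f) {x y : V},
      x ∈ (e : Sym2 V) → y ∈ (f : Sym2 V) →
      ∃ q : T.Walk x y, ∀ d ∈ q.edges, ∃ g ∈ p.support, (g : Sym2 V) = d := by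
  intro e f p
  induction p with
  | nil =>
    intro x y hx hy
    obtain ⟨q, hq⟩ := walk_within_edge _ hx hy
    exact ⟨q, fun d hd => ⟨_, by simp, (hq d hd).symm⟩⟩
  | @cons e e' f h p ih =>
    intro x y hx hy
    obtain ⟨-, u, hu1, hu2⟩ := SimpleGraph.lineGraph_adj_iff_exists.mp h
    obtain ⟨q1, hq1⟩ := walk_within_edge e hx hu1
    obtain ⟨q2, hq2⟩ := ih hu2 hy
    refine ⟨q1.append q2, fun d hd => ?_⟩
    rw [SimpleGraph.Walk.edges_append, List.mem_append] at hd
    rcases hd with hd | hd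
    · exact ⟨e, by simp, (hq1 d hd).symm⟩
    · obtain ⟨g, hg, hgd⟩ := hq2 d hd
      exact ⟨g, by simp [hg], hgd⟩

/-- Along a line-graph walk with no repeated vertex, if some vertex `x` of `T` lies in
both the first and the last edge, then it lies in every edge of the walk. -/
lemma common_vertex_of_walk {V : Type*} {T : SimpleGraph V} (hT : T.IsAcyclic) :
    ∀ {e f : T.edgeSet} (p : T.lineGraph.Walk e f) {x : V},
      p.support.Nodup → x ∈ (e : Sym2 V) → x ∈ (f : Sym2 V) →
      ∀ g ∈ p.support, x ∈ (g : Sym2 V) := by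
  intro e f p
  induction p with
  | nil =>
    intro x _ hx _ g hg
    simp only [SimpleGraph.Walk.support_nil, List.mem_singleton] at hg
    subst hg; exact hx
  | @cons e e' f h p ih =>
    intro x hnd hx hf g hg
    obtain ⟨hne, u, hu1, hu2⟩ := SimpleGraph.lineGraph_adj_iff_exists.mp h
    rw [SimpleGraph.Walk.support_cons, List.nodup_cons] at hnd
    obtain ⟨hprev, hnd'⟩ := hnd
    -- claim u = x
    have hux : u = x := by
      by_contra hux
      -- e = s(x,u) is a bridge, but there is a walk from u to x avoiding e
      have he : (e : Sym2 V) = s(x, u) :=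
        (Sym2.mem_and_mem_iff (fun hh => hux hh.symm)).mp ⟨hx, hu1⟩
      have hbridge : T.IsBridge s(x, u) := by
        have hadj : T.Adj x u := by
          have := e.2; rw [he] at this; exact this
        exact (SimpleGraph.isAcyclic_iff_forall_adj_isBridge.mp hT) hadj
      obtain ⟨q, hq⟩ := exists_walk_of_lineGraph_walk p hu2 hf
      have hnot : s(x, u) ∉ q.edges := by
        intro hmem
        obtain ⟨g', hg', hgd⟩ := hq _ hmem
        have : g' = e := Subtype.ext (by rw [hgd, he])
        exact hprev (this ▸ hg')
      have hreach : (T \ SimpleGraph.fromEdgeSet {s(x, u)}).Reachable x u := by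
        exact SimpleGraph.reachable_delete_edges_iff_exists_walk.mpr
          ⟨q.reverse, by simpa using hnot⟩
      exact (SimpleGraph.isBridge_iff.mp hbridge) hreach
    subst hux
    rw [SimpleGraph.Walk.support_cons, List.mem_cons] at hg
    rcases hg with hg | hg
    · subst hg; exact hx
    · exact ih hnd' hu2 hf g hg

/-- In the line graph of a tree, the vertex set of any cycle induces a complete
subgraph: any two distinct vertices on the cycle are adjacent. In particular every
induced cycle in the line graph of a tree is a triangle. -/
theorem cycle_in_lineGraph_of_tree_is_clique {V : Type*} (T : SimpleGraph V)
    (hT : T.IsTree) {a : T.edgeSet} (w : T.lineGraph.Walk a a) (hw : w.IsCycle) :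
    ∀ u ∈ w.support, ∀ v ∈ w.support, u ≠ v → T.lineGraph.Adj u v := by
  -- decompose the cycle
  cases w with
  | nil => exact absurd hw (by simp [SimpleGraph.Walk.isCycle_def])
  | @cons _ b _ h p =>
    obtain ⟨hne, x, hxa, hxb⟩ := SimpleGraph.lineGraph_adj_iff_exists.mp h
    have hp : p.IsPath := ((SimpleGraph.Walk.cons_isCycle_iff p h).mp hw).1
    have hall : ∀ g ∈ p.support, x ∈ (g : Sym2 V) :=
      common_vertex_of_walk hT.IsAcyclic p hp.support_nodup hxb hxa
    have hall' : ∀ g ∈ (SimpleGraph.Walk.cons h p).support, x ∈ (g : Sym2 V) := by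
      intro g hg
      rw [SimpleGraph.Walk.support_cons, List.mem_cons] at hg
      rcases hg with hg | hg
      · subst hg; exact hxa
      · exact hall g hg
    intro u hu v hv huv
    exact SimpleGraph.lineGraph_adj_iff_exists.mpr ⟨huv, x, hall' u hu, hall' v hv⟩
end

section
/- Let A be a real n×n matrix such that the number of real eigenvalues of A in (-∞, −1), counted with algebraic multiplicity, is even, and let m ≥ 2 be an integer. Then the number of eigenvalues of A^m (over ℂ, counted with algebraic multiplicity) lying in (-∞, −1) is also even. -/
open Polynomial Matrix


private lemma eval_charpoly' {n : ℕ} (B : Matrix (Fin n) (Fin n) ℂ) (z : ℂ) :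
    B.charpoly.eval z = (Matrix.scalar (Fin n) z - B).det := by
  rw [Matrix.charpoly, eval_det, matPolyEquiv_charmatrix]
  simp

private lemma multiset_prod_swap {α β : Type*} (s : Multiset α) (t : Multiset β)
    (f : α → β → ℂ) :
    (s.map fun a => (t.map fun b => f a b).prod).prod
      = (t.map fun b => (s.map fun a => f a b).prod).prod := by
  induction s using Multiset.induction with
  | empty => simp
  | cons a s ih => simp [ih, Multiset.prod_map_mul]

private lemma charpoly_pow_roots {n : ℕ} (B : Matrix (Fin n) (Fin n) ℂ) {m : ℕ}
    (hm : m ≠ 0) :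
    (B ^ m).charpoly.roots = B.charpoly.roots.map (· ^ m) := by
  set p := B.charpoly with hp
  set R := p.roots with hR
  have hmon : p.Monic := B.charpoly_monic
  have hdeg : p.natDegree = n := by
    rw [hp, Matrix.charpoly_natDegree_eq_dim, Fintype.card_fin]
  have hcard : Multiset.card R = n := by
    rw [hR, ← hdeg]
    exact (Polynomial.splits_iff_card_roots.mp (IsAlgClosed.splits p))
  have hpeq : (R.map fun a => X - C a).prod = p :=
    Polynomial.prod_multiset_X_sub_C_of_monic_of_roots_card_eq hmon (by rw [hcard, hdeg])
  -- the claimed form of the charpoly of `B ^ m`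
  suffices h : (B ^ m).charpoly = ((R.map (· ^ m)).map fun a => X - C a).prod by
    rw [h, Polynomial.roots_multiset_prod_X_sub_C]
  apply Polynomial.funext
  intro z
  obtain ⟨w, hw⟩ := IsAlgClosed.exists_pow_nat_eq z (Nat.pos_of_ne_zero hm)
  set f : ℂ[X] := X ^ m - C z with hf
  have hfmon : f.Monic := monic_X_pow_sub_C z hm
  have hfdeg : f.natDegree = m := natDegree_X_pow_sub_C
  set S := f.roots with hS
  have hScard : Multiset.card S = m := by
    rw [hS, ← hfdeg]
    exact (Polynomial.splits_iff_card_roots.mp (IsAlgClosed.splits f))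
  have hfeq : (S.map fun c => X - C c).prod = f :=
    Polynomial.prod_multiset_X_sub_C_of_monic_of_roots_card_eq hfmon (by rw [hScard, hfdeg])
  have hfeval : ∀ a : ℂ, (S.map fun c => a - c).prod = a ^ m - z := by
    intro a
    have h := congrArg (Polynomial.eval a) hfeq
    rw [Polynomial.eval_multiset_prod, Multiset.map_map] at h
    simpa [hf, Function.comp] using h
  -- compute eval of LHS
  have key : det (Matrix.scalar (Fin n) z - B ^ m)
      = (-1 : ℂ) ^ n * det (Polynomial.aeval B f) := by
    have h1 : Polynomial.aeval B f = B ^ m - Matrix.scalar (Fin n) z := by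
      simp [hf, Polynomial.aeval_def, Matrix.scalar, algebraMap_eq_diagonal]
    rw [h1, show Matrix.scalar (Fin n) z - B ^ m = -(B ^ m - Matrix.scalar (Fin n) z) from
      (neg_sub _ _).symm, Matrix.det_neg, Fintype.card_fin]
  have hdetf : det (Polynomial.aeval B f)
      = (S.map fun c => (-1 : ℂ) ^ n * p.eval c).prod := by
    obtain ⟨L, hL⟩ : ∃ L : List ℂ, (L : Multiset ℂ) = S := ⟨S.toList, S.coe_toList⟩
    have hfL : f = (L.map fun c => X - C c).prod := by
      rw [← hfeq, ← hL]
      simp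
    rw [hfL, map_list_prod (Polynomial.aeval B), ← Matrix.coe_detMonoidHom,
      map_list_prod (Matrix.detMonoidHom (n := Fin n) (R := ℂ)), ← hL]
    simp only [List.map_map, Matrix.coe_detMonoidHom]
    rw [Multiset.map_coe, Multiset.prod_coe]
    congr 1
    apply List.map_congr_left
    intro c _
    have h2 : (Polynomial.aeval B) (X - C c) = B - Matrix.scalar (Fin n) c := by
      simp [Polynomial.aeval_def, Matrix.scalar, algebraMap_eq_diagonal]
    simp only [Function.comp]
    rw [h2, show B - Matrix.scalar (Fin n) c = -(Matrix.scalar (Fin n) c - B) from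
      (neg_sub _ _).symm, Matrix.det_neg, Fintype.card_fin, ← eval_charpoly']
  have hpc : ∀ c : ℂ, p.eval c = (R.map fun a => c - a).prod := by
    intro c
    conv_lhs => rw [← hpeq]
    rw [Polynomial.eval_multiset_prod, Multiset.map_map]
    congr 1
    apply Multiset.map_congr rfl
    intro a _
    simp
  -- now the computation
  have lhs : ((B ^ m).charpoly).eval z
      = (-1 : ℂ) ^ n * ((-1 : ℂ) ^ (n * m) *
        (R.map fun a => (-1 : ℂ) ^ (m + 1) * (z - a ^ m)).prod) := by
    rw [eval_charpoly', key, hdetf]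
    congr 1
    rw [Multiset.prod_map_mul]
    congr 1
    · rw [Multiset.map_const', Multiset.prod_replicate, hScard, ← pow_mul]
    · rw [show (S.map fun c => p.eval c) = S.map fun c => (R.map fun a => c - a).prod by
        apply Multiset.map_congr rfl; intro c _; exact hpc c]
      rw [multiset_prod_swap]
      congr 1
      apply Multiset.map_congr rfl
      intro a _
      have : (S.map fun c => c - a) = S.map fun c => (-1) * (a - c) := by
        apply Multiset.map_congr rfl; intro c _; ring
      rw [this, Multiset.prod_map_mul, Multiset.map_const', Multiset.prod_replicate, hScard,
        hfeval a]
      ring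
  have heval : (((R.map (· ^ m)).map fun a => X - C a).prod).eval z
      = (R.map fun a => z - a ^ m).prod := by
    rw [Polynomial.eval_multiset_prod]
    simp [Multiset.map_map, Function.comp]
  have hsign : (-1 : ℂ) ^ n * ((-1 : ℂ) ^ (n * m) * (((-1 : ℂ) ^ (m + 1)) ^ n *
      (R.map fun a => z - a ^ m).prod)) = (R.map fun a => z - a ^ m).prod := by
    rw [← pow_mul]
    rw [show (-1 : ℂ) ^ n * ((-1:ℂ) ^ (n*m) * ((-1:ℂ) ^ ((m+1)*n) * (R.map fun a => z - a ^ m).prod))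
      = (-1 : ℂ) ^ (n + n*m + (m+1)*n) * (R.map fun a => z - a ^ m).prod by
        rw [pow_add, pow_add]; ring]
    have : Even (n + n * m + (m + 1) * n) := ⟨n + n * m, by ring⟩
    rw [this.neg_one_pow, one_mul]
  rw [lhs, heval, Multiset.prod_map_mul, Multiset.map_const', Multiset.prod_replicate, hcard]
  exact hsign

/-- If the number of real eigenvalues of a real matrix `A` in `(-∞, -1)`, counted with
algebraic multiplicity, is even, then for any integer `m ≥ 2` the number of eigenvalues
of `A ^ m` over `ℂ` (counted with algebraic multiplicity) lying in `(-∞, -1)` is even. -/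
theorem even_card_lt_neg_one_eigenvalues_pow
    {n : ℕ} (A : Matrix (Fin n) (Fin n) ℝ)
    (hA : Even ((A.charpoly.roots.filter (fun x : ℝ => x < -1)).card))
    (m : ℕ) (hm : 2 ≤ m) :
    Even ((((A ^ m).charpoly.map (algebraMap ℝ ℂ)).roots.filter
      (fun z : ℂ => z.im = 0 ∧ z.re < -1)).card) := by
  classical
  have hm0 : m ≠ 0 := by omega
  have hinj : Function.Injective (algebraMap ℝ ℂ) := (algebraMap ℝ ℂ).injective
  set B : Matrix (Fin n) (Fin n) ℂ := A.map (algebraMap ℝ ℂ) with hB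
  have hpC : B.charpoly = (A.charpoly).map (algebraMap ℝ ℂ) :=
    Matrix.charpoly_map A (algebraMap ℝ ℂ)
  have hmapc : (A ^ m).charpoly.map (algebraMap ℝ ℂ) = (B ^ m).charpoly := by
    have h1 : (A ^ m).map (algebraMap ℝ ℂ) = B ^ m := by
      simpa [RingHom.mapMatrix_apply, hB] using map_pow (RingHom.mapMatrix (algebraMap ℝ ℂ)) A m
    rw [← h1, ← Matrix.charpoly_map]
  rw [hmapc, charpoly_pow_roots B hm0]
  set R := B.charpoly.roots with hR
  set Q : ℂ → Prop := fun a => ((a ^ m).im = 0 ∧ (a ^ m).re < -1) with hQ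
  have hcards : ((R.map (· ^ m)).filter (fun z : ℂ => z.im = 0 ∧ z.re < -1)).card
      = (R.filter Q).card := by
    rw [← Multiset.countP_eq_card_filter, Multiset.countP_map]
  rw [hcards]
  -- conjugation-invariance of the root multiset
  have hcRconj : ∀ z : ℂ, R.count ((starRingEnd ℂ) z) = R.count z := by
    intro z
    have hmapconj : (B.charpoly).map (starRingEnd ℂ) = B.charpoly := by
      rw [hpC, Polynomial.map_map]
      congr 1
      ext x
      simp [Complex.conj_ofReal]
    rw [hR, Polynomial.count_roots, Polynomial.count_roots]
    conv_lhs => rw [← hmapconj]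
    exact (Polynomial.eq_rootMultiplicity_map (RingHom.injective (starRingEnd ℂ)) z).symm
  have hQconj : ∀ z : ℂ, Q ((starRingEnd ℂ) z) ↔ Q z := by
    intro z
    have h1 : ((starRingEnd ℂ) z) ^ m = (starRingEnd ℂ) (z ^ m) :=
      (map_pow (starRingEnd ℂ) z m).symm
    rw [hQ]
    constructor
    · rintro ⟨h2, h3⟩
      rw [h1, Complex.conj_im, neg_eq_zero] at h2
      rw [h1, Complex.conj_re] at h3
      exact ⟨h2, h3⟩
    · rintro ⟨h2, h3⟩
      refine ⟨?_, ?_⟩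
      · rw [h1, Complex.conj_im, h2, neg_zero]
      · rw [h1, Complex.conj_re]; exact h3
  -- split according to the sign of the imaginary part
  have hsplit : R.filter Q = (R.filter fun z => Q z ∧ z.im < 0)
      + (R.filter fun z => Q z ∧ z.im = 0) + (R.filter fun z => Q z ∧ 0 < z.im) := by
    ext z
    simp only [Multiset.count_add, Multiset.count_filter]
    rcases lt_trichotomy z.im 0 with h | h | h
    · by_cases hq : Q z <;> simp [h, hq, h.ne, asymm h]
    · by_cases hq : Q z <;> simp [h, hq]
    · by_cases hq : Q z <;> simp [h, hq, h.ne', asymm h]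
  have hnegpos : (R.filter fun z => Q z ∧ z.im < 0)
      = ((R.filter fun z => Q z ∧ 0 < z.im)).map (starRingEnd ℂ) := by
    ext z
    have h1 : Multiset.count z (((R.filter fun z => Q z ∧ 0 < z.im)).map (starRingEnd ℂ))
        = Multiset.count ((starRingEnd ℂ) z) (R.filter fun z => Q z ∧ 0 < z.im) := by
      conv_lhs => rw [show z = (starRingEnd ℂ) ((starRingEnd ℂ) z) by simp]
      exact Multiset.count_map_eq_count' _ _ (RingHom.injective _) _
    rw [h1, Multiset.count_filter, Multiset.count_filter, hcRconj z]
    refine if_congr ?_ rfl rfl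
    rw [hQconj]
    simp only [and_congr_right_iff]
    intro _
    simp [Complex.conj_im, neg_pos]
  -- the real part of the multiset
  have hcR_real : ∀ x : ℝ, R.count ((x : ℝ) : ℂ) = (A.charpoly.roots).count x := by
    intro x
    rw [hR, Polynomial.count_roots, Polynomial.count_roots, hpC]
    have := (Polynomial.eq_rootMultiplicity_map (p := A.charpoly) hinj x).symm
    simpa using this
  have hzero : (R.filter fun z => Q z ∧ z.im = 0)
      = ((A.charpoly.roots.filter fun x : ℝ => Q ((x : ℂ))).map fun x : ℝ => (x : ℂ)) := by
    ext z
    by_cases hz : z.im = 0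
    · have hzz : z = ((z.re : ℝ) : ℂ) := by
        apply Complex.ext <;> simp [hz]
      rw [hzz]
      rw [Multiset.count_filter,
        Multiset.count_map_eq_count' _ _ (fun a b hab => by exact_mod_cast hab) _,
        Multiset.count_filter, hcR_real]
      refine if_congr ?_ rfl rfl
      simp
    · rw [Multiset.count_filter, if_neg (fun hcon => hz hcon.2)]
      symm
      rw [Multiset.count_eq_zero]
      intro hmem
      obtain ⟨x, -, rfl⟩ := Multiset.mem_map.mp hmem
      exact hz (by simp)
  rw [hsplit]
  simp only [Multiset.card_add]
  have hnp : (R.filter fun z => Q z ∧ z.im < 0).card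
      = (R.filter fun z => Q z ∧ 0 < z.im).card := by
    rw [hnegpos, Multiset.card_map]
  have hzcard : (R.filter fun z => Q z ∧ z.im = 0).card
      = (A.charpoly.roots.filter fun x : ℝ => Q ((x : ℂ))).card := by
    rw [hzero, Multiset.card_map]
  rw [hnp, hzcard]
  have hmid : Even ((A.charpoly.roots.filter fun x : ℝ => Q ((x : ℂ))).card) := by
    rcases Nat.even_or_odd m with hme | hmo
    · have hnil : (A.charpoly.roots.filter fun x : ℝ => Q ((x : ℂ))) = 0 := by
        rw [Multiset.filter_eq_nil]
        intro x hx hQx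
        rw [hQ] at hQx
        have h2 : (((x : ℂ)) ^ m).re = x ^ m := by
          rw [← Complex.ofReal_pow, Complex.ofReal_re]
        have h3 : (0 : ℝ) ≤ x ^ m := hme.pow_nonneg x
        rw [h2] at hQx
        linarith [hQx.2]
      rw [hnil]
      simp
    · have heq : (A.charpoly.roots.filter fun x : ℝ => Q ((x : ℂ)))
          = A.charpoly.roots.filter (fun x : ℝ => x < -1) := by
        apply Multiset.filter_congr
        intro x hx
        rw [hQ]
        simp only [← Complex.ofReal_pow, Complex.ofReal_im, Complex.ofReal_re, true_and]
        constructor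
        · intro h
          have h1 : x ^ m < (-1 : ℝ) ^ m := by rw [hmo.neg_one_pow]; exact h
          exact (hmo.strictMono_pow (R := ℝ)).lt_iff_lt.mp h1
        · intro h
          have h1 : x ^ m < (-1 : ℝ) ^ m := (hmo.strictMono_pow (R := ℝ)).lt_iff_lt.mpr h
          rwa [hmo.neg_one_pow] at h1
      rw [heq]
      exact hA
  rcases hmid with ⟨k, hk⟩
  exact ⟨(R.filter fun z => Q z ∧ 0 < z.im).card + k, by omega⟩
end
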